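/- arXiv:2401.17419 — 6 statements merged into one kernel-verified Lean document; each statement's English description precedes it below -/
import Mathlib

section
/- For every positive integer ℓ and every positive integer S, the infinite series ∑_{k=ℓ+1}^∞ k·S_k, where S_k = ∑_{s=1}^{S} 1/((k!)^S (k+1)^s), equals 1/((ℓ+1)!)^S. Equivalently, ∑_{k=ℓ+1}^∞ ∑_{s=1}^{S} k/((k!)^S (k+1)^s) = 1/((ℓ+1)!)^S. -/
open Finset

lemma geom_aux (n S : ℕ) (hn : 1 ≤ n) :
    ∑ s ∈ Finset.Icc 1 S, (n : ℝ) / ((n : ℝ) + 1) ^ s = 1 - 1 / ((n : ℝ) + 1) ^ S := by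
  have hpos : (0 : ℝ) < (n : ℝ) + 1 := by positivity
  induction S with
  | zero => simp
  | succ S ih =>
      rw [Finset.sum_Icc_succ_top (by omega), ih]
      have h1 : ((n : ℝ) + 1) ^ S ≠ 0 := by positivity
      have h2 : ((n : ℝ) + 1) ^ (S + 1) ≠ 0 := by positivity
      field_simp
      ring

lemma inner_aux (n S : ℕ) (hn : 1 ≤ n) :
    ∑ s ∈ Finset.Icc 1 S,
        (n : ℝ) / (((Nat.factorial n : ℕ) : ℝ) ^ S * ((n + 1 : ℕ) : ℝ) ^ s)
      = 1 / ((Nat.factorial n : ℝ) ^ S) - 1 / ((Nat.factorial (n + 1) : ℝ) ^ S) := by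
  have hf : (0 : ℝ) < (Nat.factorial n : ℝ) := by
    exact_mod_cast Nat.factorial_pos n
  have key : ∀ s ∈ Finset.Icc 1 S,
      (n : ℝ) / (((Nat.factorial n : ℕ) : ℝ) ^ S * ((n + 1 : ℕ) : ℝ) ^ s)
      = (1 / (Nat.factorial n : ℝ) ^ S) * ((n : ℝ) / ((n : ℝ) + 1) ^ s) := by
    intro s _
    push_cast
    field_simp
  rw [Finset.sum_congr rfl key, ← Finset.mul_sum, geom_aux n S hn]
  have hfact : (Nat.factorial (n + 1) : ℝ) = ((n : ℝ) + 1) * (Nat.factorial n : ℝ) := by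
    rw [Nat.factorial_succ]; push_cast; ring
  rw [hfact, mul_pow]
  have h1 : ((n : ℝ) + 1) ^ S ≠ 0 := by positivity
  have h2 : (Nat.factorial n : ℝ) ^ S ≠ 0 := by positivity
  field_simp

/-- For positive integers ℓ and S,
∑_{k=ℓ+1}^∞ ∑_{s=1}^{S} k/((k!)^S (k+1)^s) = 1/((ℓ+1)!)^S. -/
theorem sum_progressive_tail (ℓ S : ℕ) (hℓ : 1 ≤ ℓ) (hS : 1 ≤ S) :
    ∑' k : ℕ, ∑ s ∈ Finset.Icc 1 S,
        ((k + ℓ + 1 : ℕ) : ℝ) /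
          (((Nat.factorial (k + ℓ + 1) : ℕ) : ℝ) ^ S * ((k + ℓ + 2 : ℕ) : ℝ) ^ s)
      = 1 / ((Nat.factorial (ℓ + 1) : ℝ) ^ S) := by
  set g : ℕ → ℝ := fun k => 1 / ((Nat.factorial (k + ℓ + 1) : ℝ) ^ S) with hg
  have hterm : ∀ k : ℕ, (∑ s ∈ Finset.Icc 1 S,
        ((k + ℓ + 1 : ℕ) : ℝ) /
          (((Nat.factorial (k + ℓ + 1) : ℕ) : ℝ) ^ S * ((k + ℓ + 2 : ℕ) : ℝ) ^ s))
      = g k - g (k + 1) := by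
    intro k
    have := inner_aux (k + ℓ + 1) S (by omega)
    simp only [hg]
    convert this using 3 <;> push_cast <;> ring_nf
  have hmono : ∀ k, g (k + 1) ≤ g k := by
    intro k
    apply one_div_le_one_div_of_le
    · positivity
    · apply pow_le_pow_left₀ (by positivity)
      exact_mod_cast Nat.factorial_le (by omega)
  have hnonneg : ∀ k, 0 ≤ g k - g (k + 1) := fun k => sub_nonneg.2 (hmono k)
  have htend : Filter.Tendsto g Filter.atTop (nhds 0) := by
    have hb : ∀ k : ℕ, g k ≤ 1 / (k + 1 : ℝ) := by
      intro k
      apply one_div_le_one_div_of_le (by positivity)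
      calc ((k : ℝ) + 1) ≤ (Nat.factorial (k + ℓ + 1) : ℝ) := by
              exact_mod_cast Nat.le_of_lt_succ (Nat.lt_succ_of_le
                (le_trans (Nat.succ_le_of_lt (Nat.lt_succ_of_le (Nat.le_add_right k ℓ)))
                  (Nat.self_le_factorial _)))
        _ ≤ (Nat.factorial (k + ℓ + 1) : ℝ) ^ S := by
              apply le_self_pow₀ _ (by omega)
              exact_mod_cast Nat.one_le_iff_ne_zero.2 (Nat.factorial_pos _).ne'
    have hb0 : ∀ k : ℕ, 0 ≤ g k := by intro k; positivity
    exact squeeze_zero hb0 hb tendsto_one_div_add_atTop_nhds_zero_nat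
  have hhas : HasSum (fun k => g k - g (k + 1)) (g 0) := by
    rw [hasSum_iff_tendsto_nat_of_nonneg hnonneg]
    have : ∀ n : ℕ, ∑ i ∈ Finset.range n, (g i - g (i + 1)) = g 0 - g n := by
      intro n
      exact Finset.sum_range_sub' g n
    simp only [this]
    have := Filter.Tendsto.const_sub (g 0) htend
    simpa using this
  calc ∑' k : ℕ, ∑ s ∈ Finset.Icc 1 S,
        ((k + ℓ + 1 : ℕ) : ℝ) /
          (((Nat.factorial (k + ℓ + 1) : ℕ) : ℝ) ^ S * ((k + ℓ + 2 : ℕ) : ℝ) ^ s)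
      = ∑' k : ℕ, (g k - g (k + 1)) := by
        exact tsum_congr hterm
    _ = g 0 := hhas.tsum_eq
    _ = 1 / ((Nat.factorial (ℓ + 1) : ℝ) ^ S) := by simp [hg]
end

section
/- Let x ∈ [0,1] and S a positive integer, and suppose x admits an S-progressive expansion x = ∑_{k=1}^∞ ∑_{s=1}^S x_{ks}/((k!)^S (k+1)^s) with digits x_{ks} ∈ {0,1,…,k}. If x < 1/((ℓ!)^S (ℓ+1)^t) for some positive integer ℓ and some t ∈ {1,…,S}, then x_{ks} = 0 for every pair (k,s) with (k,s) ⪯ (ℓ,t) in the lexicographic order (i.e., k < ℓ, or k = ℓ and s ≤ t). -/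
/-- If x ∈ [0,1] has an S-progressive expansion with digits `d k s ∈ {0,…,k}` and
x < 1/((ℓ!)^S (ℓ+1)^t) with 1 ≤ t ≤ S, then all digits at positions (k,s) ⪯ (ℓ,t) vanish. -/
theorem progressive_expansion_small (S : ℕ) (hS : 1 ≤ S) (x : ℝ)
    (hx0 : 0 ≤ x) (hx1 : x ≤ 1)
    (d : ℕ → ℕ → ℕ)
    (hd : ∀ k s, 1 ≤ k → 1 ≤ s → s ≤ S → d k s ≤ k)
    (hexp : x = ∑' k : ℕ, ∑ s ∈ Finset.Icc 1 S,
        ((d (k + 1) s : ℕ) : ℝ) /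
          ((Nat.factorial (k + 1) : ℝ) ^ S * ((k : ℝ) + 2) ^ s))
    (ℓ t : ℕ) (hℓ : 1 ≤ ℓ) (ht1 : 1 ≤ t) (htS : t ≤ S)
    (hsmall : x < 1 / ((Nat.factorial ℓ : ℝ) ^ S * ((ℓ : ℝ) + 1) ^ t)) :
    ∀ k s, 1 ≤ k → 1 ≤ s → s ≤ S → (k < ℓ ∨ (k = ℓ ∧ s ≤ t)) → d k s = 0 := by
  intro k s hk hs hsS hord
  by_contra hne
  have hd1 : 1 ≤ d k s := Nat.one_le_iff_ne_zero.mpr hne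
  set f : ℕ → ℝ := fun n => ∑ s ∈ Finset.Icc 1 S,
      ((d (n + 1) s : ℕ) : ℝ) /
        ((Nat.factorial (n + 1) : ℝ) ^ S * ((n : ℝ) + 2) ^ s) with hf
  have hfnn : ∀ n, 0 ≤ f n := by
    intro n
    apply Finset.sum_nonneg
    intro i _
    positivity
  have hfle : ∀ n, f n ≤ (S : ℝ) * (1 ^ n / (Nat.factorial n : ℝ)) := by
    intro n
    have hterm : ∀ i ∈ Finset.Icc 1 S,
        ((d (n + 1) i : ℕ) : ℝ) /
          ((Nat.factorial (n + 1) : ℝ) ^ S * ((n : ℝ) + 2) ^ i)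
        ≤ 1 / (Nat.factorial n : ℝ) := by
      intro i hi
      simp only [Finset.mem_Icc] at hi
      have hnum : ((d (n + 1) i : ℕ) : ℝ) ≤ (n : ℝ) + 1 := by
        have := hd (n + 1) i (Nat.succ_le_succ n.zero_le) hi.1 hi.2
        exact_mod_cast this
      have hden : ((Nat.factorial (n + 1) : ℝ)) ≤
          (Nat.factorial (n + 1) : ℝ) ^ S * ((n : ℝ) + 2) ^ i := by
        have h1 : (1 : ℝ) ≤ ((n : ℝ) + 2) ^ i := one_le_pow₀ (by linarith)
        have h2 : (Nat.factorial (n + 1) : ℝ) ≤ (Nat.factorial (n + 1) : ℝ) ^ S := by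
          calc (Nat.factorial (n + 1) : ℝ) = (Nat.factorial (n + 1) : ℝ) ^ 1 := (pow_one _).symm
          _ ≤ (Nat.factorial (n + 1) : ℝ) ^ S := by
            apply pow_le_pow_right₀ _ hS
            exact_mod_cast Nat.one_le_iff_ne_zero.mpr (Nat.factorial_ne_zero _)
        calc (Nat.factorial (n + 1) : ℝ) ≤ (Nat.factorial (n + 1) : ℝ) ^ S := h2
        _ = (Nat.factorial (n + 1) : ℝ) ^ S * 1 := (mul_one _).symm
        _ ≤ (Nat.factorial (n + 1) : ℝ) ^ S * ((n : ℝ) + 2) ^ i := by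
            apply mul_le_mul_of_nonneg_left h1; positivity
      have hfacpos : (0 : ℝ) < (Nat.factorial (n + 1) : ℝ) := by
        exact_mod_cast Nat.factorial_pos _
      calc ((d (n + 1) i : ℕ) : ℝ) /
            ((Nat.factorial (n + 1) : ℝ) ^ S * ((n : ℝ) + 2) ^ i)
          ≤ ((n : ℝ) + 1) / (Nat.factorial (n + 1) : ℝ) := by
            apply div_le_div₀ (by positivity) hnum hfacpos hden
        _ = 1 / (Nat.factorial n : ℝ) := by
            rw [Nat.factorial_succ]
            push_cast
            rw [div_eq_div_iff (by positivity) (by positivity)]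
            ring
    calc f n ≤ ∑ i ∈ Finset.Icc 1 S, 1 / (Nat.factorial n : ℝ) :=
          Finset.sum_le_sum hterm
      _ = (S : ℝ) * (1 ^ n / (Nat.factorial n : ℝ)) := by
          rw [Finset.sum_const, Nat.card_Icc]
          simp [nsmul_eq_mul]
  have hsum : Summable f := by
    apply Summable.of_nonneg_of_le hfnn hfle
    exact (Real.summable_pow_div_factorial 1).mul_left _
  obtain ⟨m, rfl⟩ : ∃ m, k = m + 1 := ⟨k - 1, (Nat.succ_pred_eq_of_pos hk).symm⟩
  have hxge : f m ≤ x := by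
    rw [hexp]
    exact Summable.le_tsum hsum m (fun j _ => hfnn j)
  have htermle : ((d (m + 1) s : ℕ) : ℝ) /
      ((Nat.factorial (m + 1) : ℝ) ^ S * ((m : ℝ) + 2) ^ s) ≤ f m := by
    apply Finset.single_le_sum (f := fun i => ((d (m + 1) i : ℕ) : ℝ) /
      ((Nat.factorial (m + 1) : ℝ) ^ S * ((m : ℝ) + 2) ^ i))
    · intro i _; positivity
    · exact Finset.mem_Icc.mpr ⟨hs, hsS⟩
  have hone : 1 / ((Nat.factorial (m + 1) : ℝ) ^ S * ((m : ℝ) + 2) ^ s) ≤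
      ((d (m + 1) s : ℕ) : ℝ) /
        ((Nat.factorial (m + 1) : ℝ) ^ S * ((m : ℝ) + 2) ^ s) := by
    gcongr
    exact_mod_cast hd1
  have hnat : Nat.factorial (m + 1) ^ S * (m + 2) ^ s ≤
      Nat.factorial ℓ ^ S * (ℓ + 1) ^ t := by
    rcases hord with hlt | ⟨heq, hst⟩
    · calc Nat.factorial (m + 1) ^ S * (m + 2) ^ s
          ≤ Nat.factorial (m + 1) ^ S * (m + 2) ^ S :=
            Nat.mul_le_mul le_rfl (Nat.pow_le_pow_right (by omega) hsS)
        _ = Nat.factorial (m + 2) ^ S := by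
            rw [Nat.factorial_succ (m + 1), mul_pow]; ring
        _ ≤ Nat.factorial ℓ ^ S := by
            exact Nat.pow_le_pow_left (Nat.factorial_le (by omega : m + 2 ≤ ℓ)) S
        _ ≤ Nat.factorial ℓ ^ S * (ℓ + 1) ^ t :=
            Nat.le_mul_of_pos_right _ (Nat.pow_pos (n := t) (Nat.succ_pos ℓ))
    · subst heq
      exact Nat.mul_le_mul le_rfl (Nat.pow_le_pow_right (by omega) hst)
  have hcast : ((Nat.factorial (m + 1) : ℝ) ^ S * ((m : ℝ) + 2) ^ s) ≤
      ((Nat.factorial ℓ : ℝ) ^ S * ((ℓ : ℝ) + 1) ^ t) := by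
    exact_mod_cast hnat
  have hfinal : 1 / ((Nat.factorial ℓ : ℝ) ^ S * ((ℓ : ℝ) + 1) ^ t) ≤
      1 / ((Nat.factorial (m + 1) : ℝ) ^ S * ((m : ℝ) + 2) ^ s) := by
    apply one_div_le_one_div_of_le (by positivity) hcast
  linarith
end

section
/- Let S be a positive integer and suppose {x_{ks}} and {y_{ks}} (for k ≥ 1, 1 ≤ s ≤ S, with digits x_{ks}, y_{ks} ∈ {0,…,k}) are two distinct S-progressive expansions of the same x ∈ [0,1]. Then there exists a pair (ℓ,t) such that x_{ks} = y_{ks} for all (k,s) ≺ (ℓ,t), |x_{ℓt} − y_{ℓt}| = 1, and for all (k,s) ≻ (ℓ,t) one of the expansions has digit 0 and the other has digit k (uniformly: the expansion with the larger digit at (ℓ,t) has all subsequent digits 0 and the other has all subsequent digits equal to their maximal value k). In particular, if x admits no finite expansion, its S-progressive expansion is unique. -/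
noncomputable def Wt (S n : ℕ) : ℝ :=
  ((Nat.factorial (n / S + 1) : ℝ) ^ S * ((n / S + 2 : ℕ) : ℝ) ^ (n % S + 1))⁻¹

lemma Wt_pos (S n : ℕ) : 0 < Wt S n := by
  unfold Wt
  positivity

lemma Wt_succ (S : ℕ) (hS : 1 ≤ S) (n : ℕ) :
    Wt S n = (((n + 1) / S + 2 : ℕ) : ℝ) * Wt S (n + 1) := by
  have hS0 : 0 < S := hS
  obtain ⟨p, q, hq, hn, hdiv, hmod⟩ :
      ∃ p q, q < S ∧ n = S * p + q ∧ n / S = p ∧ n % S = q := by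
    exact ⟨n / S, n % S, Nat.mod_lt _ hS0, (Nat.div_add_mod n S).symm, rfl, rfl⟩
  by_cases hcase : q + 1 = S
  · -- crossing a level: n+1 = S*(p+1)
    have h1 : n + 1 = S * (p + 1) := by
      have hms : S * (p + 1) = S * p + S := by ring
      omega
    have hdiv' : (n + 1) / S = p + 1 := by rw [h1, Nat.mul_div_cancel_left _ hS0]
    have hmod' : (n + 1) % S = 0 := by rw [h1, Nat.mul_mod_right]
    unfold Wt
    rw [hdiv, hmod, hdiv', hmod', hcase]
    have hfact : (Nat.factorial (p + 1 + 1) : ℝ) = (p + 2) * Nat.factorial (p + 1) := by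
      rw [Nat.factorial_succ]; push_cast; ring
    have hf : (0:ℝ) < (Nat.factorial (p + 1) : ℝ) := by positivity
    have hp2 : (0:ℝ) < ((p + 2 : ℕ) : ℝ) := by positivity
    have hp3 : (0:ℝ) < ((p + 1 + 2 : ℕ) : ℝ) := by positivity
    rw [hfact]
    push_cast
    rw [mul_pow]
    field_simp
  · have hq1 : q + 1 < S := by omega
    have h1 : n + 1 = S * p + (q + 1) := by omega
    have hdiv' : (n + 1) / S = p := by
      rw [h1, Nat.mul_add_div hS0, Nat.div_eq_of_lt hq1, Nat.add_zero]
    have hmod' : (n + 1) % S = q + 1 := by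
      rw [h1, Nat.mul_add_mod, Nat.mod_eq_of_lt hq1]
    unfold Wt
    rw [hdiv, hmod, hdiv', hmod']
    have hf : (0:ℝ) < (Nat.factorial (p + 1) : ℝ) := by positivity
    have hp2 : (0:ℝ) < ((p + 2 : ℕ) : ℝ) := by positivity
    rw [pow_succ ((p + 2 : ℕ) : ℝ) (q + 1)]
    push_cast
    field_simp

lemma Wt_zero (S : ℕ) (hS : 1 ≤ S) : Wt S 0 = 1 / 2 := by
  unfold Wt
  rw [Nat.zero_div, Nat.zero_mod]
  norm_num [Nat.factorial]

lemma Wt_le (S : ℕ) (hS : 1 ≤ S) (n : ℕ) : Wt S n ≤ (1 / 2) ^ (n + 1) := by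
  induction n with
  | zero => rw [Wt_zero S hS]; norm_num
  | succ n ih =>
    have h := Wt_succ S hS n
    have hpos := Wt_pos S (n + 1)
    have h2 : (2:ℝ) ≤ (((n + 1) / S + 2 : ℕ) : ℝ) := by
      have : 2 ≤ (n + 1) / S + 2 := Nat.le_add_left 2 _
      exact_mod_cast this
    have : 2 * Wt S (n + 1) ≤ Wt S n := by
      calc 2 * Wt S (n + 1) ≤ (((n + 1) / S + 2 : ℕ) : ℝ) * Wt S (n + 1) := by
            apply mul_le_mul_of_nonneg_right h2 hpos.le
        _ = Wt S n := h.symm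
    have := this.trans ih
    calc Wt S (n + 1) ≤ (1/2)^(n+1) / 2 := by linarith
      _ = (1/2)^(n+1+1) := by ring

lemma Wt_telescope (S : ℕ) (hS : 1 ≤ S) (n : ℕ) :
    (((n + 1) / S + 1 : ℕ) : ℝ) * Wt S (n + 1) = Wt S n - Wt S (n + 1) := by
  have h := Wt_succ S hS n
  rw [h]
  push_cast
  ring

lemma Wt_tendsto (S : ℕ) (hS : 1 ≤ S) (n₀ : ℕ) :
    Filter.Tendsto (fun N => Wt S (n₀ + N)) Filter.atTop (nhds 0) := by
  apply squeeze_zero (fun N => (Wt_pos S (n₀ + N)).le)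
    (fun N => (Wt_le S hS (n₀ + N)).trans ?_)
  · have h : Filter.Tendsto (fun N : ℕ => ((1:ℝ)/2) ^ N) Filter.atTop (nhds 0) := by
      apply tendsto_pow_atTop_nhds_zero_of_lt_one <;> norm_num
    exact h
  · apply pow_le_pow_of_le_one (by norm_num) (by norm_num)
    omega

lemma hasSum_tail (S : ℕ) (hS : 1 ≤ S) (n₀ : ℕ) :
    HasSum (fun m => (((m + (n₀ + 1)) / S + 1 : ℕ) : ℝ) * Wt S (m + (n₀ + 1)))
      (Wt S n₀) := by
  rw [hasSum_iff_tendsto_nat_of_nonneg]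
  · have key : ∀ N, ∑ m ∈ Finset.range N,
        (((m + (n₀ + 1)) / S + 1 : ℕ) : ℝ) * Wt S (m + (n₀ + 1))
        = Wt S n₀ - Wt S (n₀ + N) := by
      intro N
      have : ∀ m ∈ Finset.range N,
          (((m + (n₀ + 1)) / S + 1 : ℕ) : ℝ) * Wt S (m + (n₀ + 1))
          = Wt S (n₀ + m) - Wt S (n₀ + (m + 1)) := by
        intro m _
        have h := Wt_telescope S hS (n₀ + m)
        have e : m + (n₀ + 1) = n₀ + m + 1 := by ring
        rw [e, h]
        congr 1 <;> ring_nf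
      rw [Finset.sum_congr rfl this, Finset.sum_range_sub' (fun m => Wt S (n₀ + m))]
      simp
    simp only [key]
    have := Wt_tendsto S hS n₀
    have h0 : Filter.Tendsto (fun N => Wt S n₀ - Wt S (n₀ + N)) Filter.atTop
        (nhds (Wt S n₀ - 0)) := Filter.Tendsto.const_sub _ this
    simpa using h0
  · intro m
    exact mul_nonneg (Nat.cast_nonneg _) (Wt_pos _ _).le

lemma summable_MW (S : ℕ) (hS : 1 ≤ S) :
    Summable (fun n => ((n / S + 1 : ℕ) : ℝ) * Wt S n) := by
  rw [← summable_nat_add_iff 1]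
  have h := (hasSum_tail S hS 0).summable
  apply h.congr
  intro m
  norm_num

lemma summable_AW (S : ℕ) (hS : 1 ≤ S) (A : ℕ → ℕ) (hA : ∀ n, A n ≤ n / S + 1) :
    Summable (fun n => (A n : ℝ) * Wt S n) := by
  apply Summable.of_nonneg_of_le
    (fun n => mul_nonneg (Nat.cast_nonneg _) (Wt_pos _ _).le)
    (fun n => ?_) (summable_MW S hS)
  apply mul_le_mul_of_nonneg_right _ (Wt_pos _ _).le
  exact_mod_cast hA n

lemma one_sided (S : ℕ) (hS : 1 ≤ S) (A B : ℕ → ℕ)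
    (hA : ∀ n, A n ≤ n / S + 1) (hB : ∀ n, B n ≤ n / S + 1)
    (hsum : ∑' n, (A n : ℝ) * Wt S n = ∑' n, (B n : ℝ) * Wt S n)
    (n₀ : ℕ) (hagree : ∀ n, n < n₀ → A n = B n) (hlt : B n₀ < A n₀) :
    A n₀ = B n₀ + 1 ∧ ∀ n, n₀ < n → A n = 0 ∧ B n = n / S + 1 := by
  set fA := fun n => (A n : ℝ) * Wt S n with hfA
  set fB := fun n => (B n : ℝ) * Wt S n with hfB
  have sA : Summable fA := summable_AW S hS A hA
  have sB : Summable fB := summable_AW S hS B hB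
  have sA' : Summable (fun m => fA (m + (n₀ + 1))) := (summable_nat_add_iff (n₀+1)).2 sA
  have sB' : Summable (fun m => fB (m + (n₀ + 1))) := (summable_nat_add_iff (n₀+1)).2 sB
  have hM := hasSum_tail S hS n₀
  have sM := hM.summable
  -- main equation
  have eqA := Summable.sum_add_tsum_nat_add (n₀ + 1) sA
  have eqB := Summable.sum_add_tsum_nat_add (n₀ + 1) sB
  have hsplitA : ∑ i ∈ Finset.range (n₀ + 1), fA i
      = ∑ i ∈ Finset.range n₀, fA i + fA n₀ := Finset.sum_range_succ _ _
  have hsplitB : ∑ i ∈ Finset.range (n₀ + 1), fB i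
      = ∑ i ∈ Finset.range n₀, fB i + fB n₀ := Finset.sum_range_succ _ _
  have hhead : ∑ i ∈ Finset.range n₀, fA i = ∑ i ∈ Finset.range n₀, fB i := by
    apply Finset.sum_congr rfl
    intro i hi
    rw [hfA, hfB]
    simp only
    rw [hagree i (Finset.mem_range.1 hi)]
  have keyeq : fA n₀ + ∑' m, fA (m + (n₀ + 1)) = fB n₀ + ∑' m, fB (m + (n₀ + 1)) := by
    have := eqA.trans (hsum.symm ▸ eqB.symm)
    rw [hsplitA, hsplitB, hhead] at this
    linarith
  -- the slack series g
  set g := fun m => ((((m + (n₀ + 1)) / S + 1 : ℕ) : ℝ) - B (m + (n₀ + 1))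
      + A (m + (n₀ + 1))) * Wt S (m + (n₀ + 1)) with hg
  have hgdecomp : ∀ m, g m = (((m + (n₀ + 1)) / S + 1 : ℕ) : ℝ) * Wt S (m + (n₀ + 1))
      - fB (m + (n₀ + 1)) + fA (m + (n₀ + 1)) := by
    intro m; rw [hg, hfA, hfB]; ring
  have sg : Summable g := by
    apply ((sM.sub sB').add sA').congr
    intro m
    rw [hgdecomp m]
  have htsumg : ∑' m, g m = Wt S n₀ - ∑' m, fB (m + (n₀ + 1)) + ∑' m, fA (m + (n₀ + 1)) := by
    calc ∑' m, g m = ∑' m, ((((m + (n₀ + 1)) / S + 1 : ℕ) : ℝ) * Wt S (m + (n₀ + 1))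
          - fB (m + (n₀ + 1)) + fA (m + (n₀ + 1))) := by
          exact tsum_congr hgdecomp
      _ = ∑' m, ((((m + (n₀ + 1)) / S + 1 : ℕ) : ℝ) * Wt S (m + (n₀ + 1))
          - fB (m + (n₀ + 1))) + ∑' m, fA (m + (n₀ + 1)) := Summable.tsum_add (sM.sub sB') sA'
      _ = ∑' m, (((m + (n₀ + 1)) / S + 1 : ℕ) : ℝ) * Wt S (m + (n₀ + 1))
          - ∑' m, fB (m + (n₀ + 1)) + ∑' m, fA (m + (n₀ + 1)) := by
          rw [Summable.tsum_sub sM sB']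
      _ = Wt S n₀ - ∑' m, fB (m + (n₀ + 1)) + ∑' m, fA (m + (n₀ + 1)) := by
          rw [hM.tsum_eq]
  have hd : fA n₀ - fB n₀ = ((A n₀ : ℝ) - B n₀) * Wt S n₀ := by rw [hfA, hfB]; ring
  have htsumg2 : ∑' m, g m = Wt S n₀ - ((A n₀ : ℝ) - B n₀) * Wt S n₀ := by
    rw [htsumg]
    have : ∑' m, fB (m + (n₀ + 1)) - ∑' m, fA (m + (n₀ + 1)) = fA n₀ - fB n₀ := by
      linarith
    rw [hd] at this
    linarith
  have hgnn : ∀ m, 0 ≤ g m := by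
    intro m
    apply mul_nonneg _ (Wt_pos _ _).le
    have h1 : (B (m + (n₀ + 1)) : ℝ) ≤ (((m + (n₀ + 1)) / S + 1 : ℕ) : ℝ) := by
      exact_mod_cast hB (m + (n₀ + 1))
    have h2 : (0:ℝ) ≤ (A (m + (n₀ + 1)) : ℝ) := Nat.cast_nonneg _
    linarith
  have hWpos := Wt_pos S n₀
  have h1le : (1:ℝ) ≤ (A n₀ : ℝ) - B n₀ := by
    have : (B n₀ : ℝ) + 1 ≤ A n₀ := by exact_mod_cast hlt
    linarith
  have hnng : 0 ≤ ∑' m, g m := tsum_nonneg hgnn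
  have hAB1 : (A n₀ : ℝ) - B n₀ = 1 := by nlinarith
  have htsumg0 : ∑' m, g m = 0 := by rw [htsumg2, hAB1]; ring
  have hgzero : ∀ m, g m = 0 := by
    intro m
    have hle : g m ≤ ∑' m, g m := Summable.le_tsum sg m (fun j _ => hgnn j)
    have := hgnn m
    linarith [htsumg0 ▸ hle]
  constructor
  · have : (A n₀ : ℝ) = (B n₀ : ℝ) + 1 := by linarith
    exact_mod_cast this
  · intro n hn
    obtain ⟨m, rfl⟩ : ∃ m, n = m + (n₀ + 1) := ⟨n - (n₀ + 1), by omega⟩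
    have h0 := hgzero m
    rw [hg] at h0
    have hW := Wt_pos S (m + (n₀ + 1))
    have hcoef : (((m + (n₀ + 1)) / S + 1 : ℕ) : ℝ) - B (m + (n₀ + 1))
        + A (m + (n₀ + 1)) = 0 := by
      rcases mul_eq_zero.1 h0 with h | h
      · exact h
      · exact absurd h hW.ne'
    have h1 : (B (m + (n₀ + 1)) : ℝ) ≤ (((m + (n₀ + 1)) / S + 1 : ℕ) : ℝ) := by
      exact_mod_cast hB (m + (n₀ + 1))
    have h2 : (0:ℝ) ≤ (A (m + (n₀ + 1)) : ℝ) := Nat.cast_nonneg _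
    have hA0 : (A (m + (n₀ + 1)) : ℝ) = 0 := by linarith
    have hBM : (B (m + (n₀ + 1)) : ℝ) = (((m + (n₀ + 1)) / S + 1 : ℕ) : ℝ) := by linarith
    exact ⟨by exact_mod_cast hA0, by exact_mod_cast hBM⟩

lemma main_aux (S : ℕ) (hS : 1 ≤ S) (A B : ℕ → ℕ)
    (hA : ∀ n, A n ≤ n / S + 1) (hB : ∀ n, B n ≤ n / S + 1)
    (hsum : ∑' n, (A n : ℝ) * Wt S n = ∑' n, (B n : ℝ) * Wt S n)
    (hne : ∃ n, A n ≠ B n) :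
    ∃ n₀, (∀ n, n < n₀ → A n = B n) ∧
      ((A n₀ = B n₀ + 1 ∧ ∀ n, n₀ < n → A n = 0 ∧ B n = n / S + 1) ∨
       (B n₀ = A n₀ + 1 ∧ ∀ n, n₀ < n → B n = 0 ∧ A n = n / S + 1)) := by
  classical
  set n₀ := Nat.find hne with hn₀
  have hne₀ : A n₀ ≠ B n₀ := Nat.find_spec hne
  have hagree : ∀ n, n < n₀ → A n = B n := by
    intro n hn
    by_contra h
    exact absurd hn (not_lt.2 (Nat.find_le h))
  refine ⟨n₀, hagree, ?_⟩
  rcases lt_or_gt_of_ne hne₀ with h | h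
  · exact Or.inr (one_sided S hS B A hB hA hsum.symm n₀ (fun n hn => (hagree n hn).symm) h)
  · exact Or.inl (one_sided S hS A B hA hB hsum n₀ hagree h)

lemma encode_lt_aux (S a b c d : ℕ) (hb : b < S) (hac : a < c) :
    a * S + b < c * S + d := by
  have h1 : (a + 1) * S ≤ c * S := Nat.mul_le_mul_right S hac
  have h2 : (a + 1) * S = a * S + S := by ring
  omega

lemma encode_lt (S a b c d : ℕ) (hb : b < S) (hd : d < S) :
    a * S + b < c * S + d ↔ (a < c ∨ (a = c ∧ b < d)) := by
  constructor
  · intro h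
    rcases lt_trichotomy a c with hac | hac | hac
    · exact Or.inl hac
    · subst hac
      exact Or.inr ⟨rfl, lt_of_add_lt_add_left h⟩
    · exact absurd (encode_lt_aux S c d a b hd hac) (by omega)
  · rintro (hac | ⟨rfl, hbd⟩)
    · exact encode_lt_aux S a b c d hb hac
    · omega

lemma encode_div_mod (S k s : ℕ) (hS : 1 ≤ S) (hk : 1 ≤ k) (hs : 1 ≤ s) (hsS : s ≤ S) :
    ((k - 1) * S + (s - 1)) / S = k - 1 ∧ ((k - 1) * S + (s - 1)) % S = s - 1 := by
  have hs1 : s - 1 < S := by omega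
  constructor
  · rw [add_comm, Nat.add_mul_div_right _ _ (by omega : 0 < S), Nat.div_eq_of_lt hs1, zero_add]
  · rw [add_comm, Nat.add_mul_mod_self_right, Nat.mod_eq_of_lt hs1]

lemma reindex (S : ℕ) (hS : 1 ≤ S) (f : ℕ → ℕ → ℕ)
    (hf : ∀ n, f (n / S + 1) (n % S + 1) ≤ n / S + 1) :
    (∑' k : ℕ, ∑ s ∈ Finset.Icc 1 S,
        ((f (k + 1) s : ℕ) : ℝ) / ((Nat.factorial (k + 1) : ℝ) ^ S * ((k : ℝ) + 2) ^ s))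
      = ∑' n : ℕ, (f (n / S + 1) (n % S + 1) : ℝ) * Wt S n := by
  haveI : NeZero S := ⟨by omega⟩
  set g : ℕ × Fin S → ℝ := fun p =>
    ((f (p.1 + 1) ((p.2 : ℕ) + 1) : ℕ) : ℝ) /
      ((Nat.factorial (p.1 + 1) : ℝ) ^ S * ((p.1 : ℝ) + 2) ^ ((p.2 : ℕ) + 1)) with hgdef
  have hge : ∀ n, g (Nat.divModEquiv S n) = (f (n / S + 1) (n % S + 1) : ℝ) * Wt S n := by
    intro n
    have h2 : ((Nat.divModEquiv S n).2 : ℕ) = n % S := by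
      simp [Nat.divModEquiv]
    have h1 : (Nat.divModEquiv S n).1 = n / S := rfl
    rw [hgdef]
    simp only [h1, h2]
    rw [Wt, div_eq_mul_inv]
    congr 2
    push_cast
    ring
  have hsumAW : Summable (fun n => (f (n / S + 1) (n % S + 1) : ℝ) * Wt S n) :=
    summable_AW S hS _ hf
  have hsumg : Summable g := by
    rw [← Equiv.summable_iff (Nat.divModEquiv S)]
    exact hsumAW.congr (fun n => (hge n).symm)
  have step1 : ∑' n : ℕ, (f (n / S + 1) (n % S + 1) : ℝ) * Wt S n = ∑' p, g p := by
    rw [← Equiv.tsum_eq (Nat.divModEquiv S) g]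
    exact tsum_congr (fun n => (hge n).symm)
  have step2 : ∑' p, g p = ∑' k : ℕ, ∑' i : Fin S, g (k, i) :=
    Summable.tsum_prod' hsumg (fun k => Summable.of_finite)
  have step3 : ∀ k : ℕ, ∑' i : Fin S, g (k, i) = ∑ s ∈ Finset.Icc 1 S,
      ((f (k + 1) s : ℕ) : ℝ) / ((Nat.factorial (k + 1) : ℝ) ^ S * ((k : ℝ) + 2) ^ s) := by
    intro k
    rw [tsum_fintype]
    rw [show Finset.Icc 1 S = Finset.Ico 1 (S + 1) by rw [Finset.Ico_add_one_right_eq_Icc]]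
    rw [Finset.sum_Ico_eq_sum_range]
    simp only [Nat.add_sub_cancel]
    rw [← Fin.sum_univ_eq_sum_range (fun i => ((f (k + 1) (1 + i) : ℕ) : ℝ) /
      ((Nat.factorial (k + 1) : ℝ) ^ S * ((k : ℝ) + 2) ^ (1 + i)))]
    apply Finset.sum_congr rfl
    intro i _
    rw [hgdef]
    simp only
    rw [add_comm 1 (i : ℕ)]
  rw [step1, step2]
  exact (tsum_congr step3).symm




/-- Two distinct S-progressive expansions of the same x ∈ [0,1] differ in the structured way:
they agree before some position (ℓ,t), differ by exactly one there, and after (ℓ,t) the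
expansion with the larger digit has all digits 0 while the other has all maximal digits. -/
theorem progressive_expansion_unique (S : ℕ) (hS : 1 ≤ S) (x : ℝ)
    (hx0 : 0 ≤ x) (hx1 : x ≤ 1)
    (a b : ℕ → ℕ → ℕ)
    (ha : ∀ k s, 1 ≤ k → 1 ≤ s → s ≤ S → a k s ≤ k)
    (hb : ∀ k s, 1 ≤ k → 1 ≤ s → s ≤ S → b k s ≤ k)
    (hexpa : x = ∑' k : ℕ, ∑ s ∈ Finset.Icc 1 S,
        ((a (k + 1) s : ℕ) : ℝ) /
          ((Nat.factorial (k + 1) : ℝ) ^ S * ((k : ℝ) + 2) ^ s))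
    (hexpb : x = ∑' k : ℕ, ∑ s ∈ Finset.Icc 1 S,
        ((b (k + 1) s : ℕ) : ℝ) /
          ((Nat.factorial (k + 1) : ℝ) ^ S * ((k : ℝ) + 2) ^ s))
    (hne : ∃ k s, 1 ≤ k ∧ 1 ≤ s ∧ s ≤ S ∧ a k s ≠ b k s) :
    ∃ ℓ t, 1 ≤ ℓ ∧ 1 ≤ t ∧ t ≤ S ∧
      (∀ k s, 1 ≤ k → 1 ≤ s → s ≤ S → (k < ℓ ∨ (k = ℓ ∧ s < t)) → a k s = b k s) ∧
      ((a ℓ t = b ℓ t + 1 ∧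
          ∀ k s, 1 ≤ k → 1 ≤ s → s ≤ S → (ℓ < k ∨ (k = ℓ ∧ t < s)) →
            a k s = 0 ∧ b k s = k) ∨
       (b ℓ t = a ℓ t + 1 ∧
          ∀ k s, 1 ≤ k → 1 ≤ s → s ≤ S → (ℓ < k ∨ (k = ℓ ∧ t < s)) →
            b k s = 0 ∧ a k s = k)) := by
  have hS0 : 0 < S := hS
  set A : ℕ → ℕ := fun n => a (n / S + 1) (n % S + 1) with hAdef
  set B : ℕ → ℕ := fun n => b (n / S + 1) (n % S + 1) with hBdef
  have hmodlt : ∀ n : ℕ, n % S < S := fun n => Nat.mod_lt _ hS0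
  have hA : ∀ n, A n ≤ n / S + 1 := fun n =>
    ha _ _ (Nat.le_add_left 1 _) (Nat.le_add_left 1 _) (hmodlt n)
  have hB : ∀ n, B n ≤ n / S + 1 := fun n =>
    hb _ _ (Nat.le_add_left 1 _) (Nat.le_add_left 1 _) (hmodlt n)
  have hsum : ∑' n, (A n : ℝ) * Wt S n = ∑' n, (B n : ℝ) * Wt S n := by
    rw [← reindex S hS a hA, ← reindex S hS b hB, ← hexpa, ← hexpb]
  -- encode/decode helper
  have hdec : ∀ k s, 1 ≤ k → 1 ≤ s → s ≤ S →
      ((k - 1) * S + (s - 1)) / S + 1 = k ∧ ((k - 1) * S + (s - 1)) % S + 1 = s := by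
    intro k s hk hs hsS
    obtain ⟨h1, h2⟩ := encode_div_mod S k s hS hk hs hsS
    omega
  have hne' : ∃ n, A n ≠ B n := by
    obtain ⟨k, s, hk, hs, hsS, hab⟩ := hne
    refine ⟨(k - 1) * S + (s - 1), ?_⟩
    obtain ⟨h1, h2⟩ := hdec k s hk hs hsS
    rw [hAdef, hBdef]
    simp only [h1, h2]
    exact hab
  obtain ⟨n₀, hagree, hmain⟩ := main_aux S hS A B hA hB hsum hne'
  refine ⟨n₀ / S + 1, n₀ % S + 1, Nat.le_add_left 1 _, Nat.le_add_left 1 _, hmodlt n₀, ?_, ?_⟩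
  · -- agreement before (ℓ, t)
    intro k s hk hs hsS hlex
    obtain ⟨h1, h2⟩ := hdec k s hk hs hsS
    have hn : (k - 1) * S + (s - 1) < n₀ := by
      have hrw : n₀ = (n₀ / S) * S + n₀ % S := (Nat.div_add_mod' n₀ S).symm
      rw [hrw]
      rw [encode_lt S _ _ _ _ (by omega) (hmodlt n₀)]
      omega
    have := hagree _ hn
    rw [hAdef, hBdef] at this
    simp only [h1, h2] at this
    exact this
  · -- the dichotomy
    have hAn₀ : A n₀ = a (n₀ / S + 1) (n₀ % S + 1) := rfl
    have hBn₀ : B n₀ = b (n₀ / S + 1) (n₀ % S + 1) := rfl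
    have tail : ∀ (P Q : ℕ → ℕ),
        (∀ n, n₀ < n → P n = 0 ∧ Q n = n / S + 1) →
        (∀ k s, (fun n => P n) ((k-1)*S+(s-1)) = P ((k-1)*S+(s-1))) →
        True := fun _ _ _ _ => trivial
    rcases hmain with ⟨heq, htail⟩ | ⟨heq, htail⟩
    · left
      refine ⟨heq, ?_⟩
      intro k s hk hs hsS hlex
      obtain ⟨h1, h2⟩ := hdec k s hk hs hsS
      have hn : n₀ < (k - 1) * S + (s - 1) := by
        have hrw : n₀ = (n₀ / S) * S + n₀ % S := (Nat.div_add_mod' n₀ S).symm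
        rw [hrw]
        rw [encode_lt S _ _ _ _ (hmodlt n₀) (by omega)]
        omega
      obtain ⟨hP, hQ⟩ := htail _ hn
      rw [hAdef] at hP
      rw [hBdef] at hQ
      simp only [h1, h2] at hP hQ
      exact ⟨hP, hQ⟩
    · right
      refine ⟨heq, ?_⟩
      intro k s hk hs hsS hlex
      obtain ⟨h1, h2⟩ := hdec k s hk hs hsS
      have hn : n₀ < (k - 1) * S + (s - 1) := by
        have hrw : n₀ = (n₀ / S) * S + n₀ % S := (Nat.div_add_mod' n₀ S).symm
        rw [hrw]
        rw [encode_lt S _ _ _ _ (hmodlt n₀) (by omega)]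
        omega
      obtain ⟨hP, hQ⟩ := htail _ hn
      rw [hBdef] at hP
      rw [hAdef] at hQ
      simp only [h1, h2] at hP hQ
      exact ⟨hP, hQ⟩
end

section
/- Let X be uniformly distributed on [0,1] and let X = ∑_{k=1}^∞ ∑_{s=1}^S X_{ks}/((k!)^S (k+1)^s) be its S-progressive expansion with digits X_{ks} ∈ {0,…,k}. Then each digit X_{ks} is uniformly distributed on {0,1,…,k}, i.e., P(X_{ks} = n) = 1/(k+1) for every n ∈ {0,…,k}. -/
open MeasureTheory

/-- The event {x ∈ [0,1) : x_{ks} = n} for the S-progressive expansion, given as a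
union of intervals. -/
def digitEvent (S k s n : ℕ) : Set ℝ :=
  ⋃ i ∈ Finset.range (Nat.factorial k ^ S * (k + 1) ^ (s - 1)),
    Set.Ico ((((k + 1) * i + n : ℕ) : ℝ) / ((Nat.factorial k : ℝ) ^ S * ((k : ℝ) + 1) ^ s))
            ((((k + 1) * i + n : ℕ) + 1 : ℝ) / ((Nat.factorial k : ℝ) ^ S * ((k : ℝ) + 1) ^ s))

/-- For X uniform on [0,1], each digit X_{ks} of the S-progressive expansion is uniform
on {0,…,k}: P(X_{ks} = n) = 1/(k+1). -/
theorem digit_uniform (S k s n : ℕ) (hS : 1 ≤ S) (hk : 1 ≤ k) (hs1 : 1 ≤ s) (hsS : s ≤ S)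
    (hn : n ≤ k) :
    volume (digitEvent S k s n) = ENNReal.ofReal (1 / ((k : ℝ) + 1)) := by
  set D : ℝ := (Nat.factorial k : ℝ) ^ S * ((k : ℝ) + 1) ^ s with hDdef
  have hD : (0:ℝ) < D := by positivity
  set N : ℕ := Nat.factorial k ^ S * (k + 1) ^ (s - 1) with hNdef
  have key : ∀ i j : ℕ, i < j →
      Disjoint (Set.Ico ((((k + 1) * i + n : ℕ) : ℝ) / D)
        ((((k + 1) * i + n : ℕ) + 1 : ℝ) / D))
        (Set.Ico ((((k + 1) * j + n : ℕ) : ℝ) / D)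
        ((((k + 1) * j + n : ℕ) + 1 : ℝ) / D)) := by
    intro i j h
    apply Set.Ico_disjoint_Ico.mpr
    have hle : ((k + 1) * i + n : ℕ) + 1 ≤ ((k + 1) * j + n : ℕ) := by nlinarith
    have hR : ((((k + 1) * i + n : ℕ) : ℝ) + 1) ≤ (((k + 1) * j + n : ℕ) : ℝ) := by
      exact_mod_cast hle
    refine min_le_of_left_le (le_max_of_le_right ?_)
    gcongr
  have hdisj : (↑(Finset.range N) : Set ℕ).PairwiseDisjoint
      (fun i => Set.Ico ((((k + 1) * i + n : ℕ) : ℝ) / D)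
        ((((k + 1) * i + n : ℕ) + 1 : ℝ) / D)) := by
    intro i _ j _ hij
    rcases hij.lt_or_gt with h | h
    · exact key i j h
    · exact (key j i h).symm
  rw [digitEvent, ← hDdef, ← hNdef, measure_biUnion_finset hdisj
    (fun i _ => measurableSet_Ico)]
  have hvol : ∀ i ∈ Finset.range N,
      volume (Set.Ico ((((k + 1) * i + n : ℕ) : ℝ) / D)
        ((((k + 1) * i + n : ℕ) + 1 : ℝ) / D)) = ENNReal.ofReal (1 / D) := by
    intro i _
    rw [Real.volume_Ico]
    congr 1
    field_simp
    ring
  rw [Finset.sum_congr rfl hvol, Finset.sum_const, Finset.card_range, nsmul_eq_mul,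
    ← ENNReal.ofReal_natCast N, ← ENNReal.ofReal_mul (by positivity)]
  congr 1
  have hs : s = (s - 1) + 1 := by omega
  have hkfac : (0:ℝ) < (Nat.factorial k : ℝ) := by positivity
  have hNcast : (N : ℝ) = (Nat.factorial k : ℝ) ^ S * ((k : ℝ) + 1) ^ (s - 1) := by
    rw [hNdef]; push_cast; ring
  have hpow : ((k:ℝ) + 1) ^ s = ((k:ℝ) + 1) ^ (s - 1) * ((k:ℝ) + 1) := by
    conv_lhs => rw [hs]
    rw [pow_succ]
  rw [hNcast, hDdef, hpow]
  have hA : (Nat.factorial k : ℝ) ^ S ≠ 0 := by positivity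
  have hB : ((k:ℝ) + 1) ^ (s - 1) ≠ 0 := by positivity
  have hB1 : (k:ℝ) + 1 ≠ 0 := by positivity
  field_simp
end

section
/- Let X be uniformly distributed on [0,1] with S-progressive expansion digits X_{ks}. Then the digits are pairwise independent: for any two distinct pairs (k,s) ≠ (ℓ,t) and any n ∈ {0,…,k}, m ∈ {0,…,ℓ}, we have P(X_{ks} = n and X_{ℓt} = m) = 1/((k+1)(ℓ+1)). -/
open MeasureTheory

lemma digitEvent_windowed (S ℓ t m u v : ℕ) (hm : m ≤ ℓ) (ht1 : 1 ≤ t) (huv : u ≤ v)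
    (hv : v ≤ Nat.factorial ℓ ^ S * (ℓ + 1) ^ (t - 1)) :
    volume (digitEvent S ℓ t m ∩
      Set.Ico ((u : ℝ) / ((Nat.factorial ℓ ^ S * (ℓ + 1) ^ (t - 1) : ℕ) : ℝ))
              ((v : ℝ) / ((Nat.factorial ℓ ^ S * (ℓ + 1) ^ (t - 1) : ℕ) : ℝ)))
    = ((v - u : ℕ) : ENNReal) *
        ENNReal.ofReal (1 / ((Nat.factorial ℓ ^ S * (ℓ + 1) ^ t : ℕ) : ℝ)) := by
  set A : ℕ := Nat.factorial ℓ ^ S * (ℓ + 1) ^ (t - 1) with hA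
  set D : ℕ := Nat.factorial ℓ ^ S * (ℓ + 1) ^ t with hD
  have hApos : 0 < A := Nat.mul_pos (Nat.pow_pos (Nat.factorial_pos ℓ))
    (Nat.pow_pos (Nat.succ_pos ℓ))
  have hDA : D = A * (ℓ + 1) := by
    rw [hA, hD, mul_assoc, ← pow_succ, Nat.sub_add_cancel ht1]
  have hDpos : 0 < D := by rw [hDA]; positivity
  have hAr : (0:ℝ) < (A:ℕ) := by exact_mod_cast hApos
  have hDr : (0:ℝ) < (D:ℕ) := by exact_mod_cast hDpos
  have hDcast : ((Nat.factorial ℓ : ℝ) ^ S * ((ℓ : ℝ) + 1) ^ t) = ((D : ℕ) : ℝ) := by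
    rw [hD]; push_cast; ring
  have hDAr : ((D:ℕ):ℝ) = ((A:ℕ):ℝ) * ((ℓ:ℝ) + 1) := by
    rw [hDA]; push_cast; ring
  -- key inequalities
  have key1 : ∀ j : ℕ, ((j:ℝ)) / ((A:ℕ):ℝ) ≤ (((ℓ + 1) * j + m : ℕ) : ℝ) / ((D:ℕ):ℝ) := by
    intro j
    rw [div_le_div_iff₀ hAr hDr, hDAr]
    push_cast
    nlinarith [hAr, (Nat.cast_nonneg m : (0:ℝ) ≤ m), (Nat.cast_nonneg j : (0:ℝ) ≤ j)]
  have key2 : ∀ j : ℕ, ((((ℓ + 1) * j + m : ℕ) : ℝ) + 1) / ((D:ℕ):ℝ) ≤ ((j:ℝ) + 1) / ((A:ℕ):ℝ) := by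
    intro j
    rw [div_le_div_iff₀ hDr hAr, hDAr]
    have hmr : ((m:ℝ)) ≤ (ℓ:ℝ) := by exact_mod_cast hm
    push_cast
    nlinarith [hAr, hmr, (Nat.cast_nonneg j : (0:ℝ) ≤ j)]
  -- the set identity
  have hset : digitEvent S ℓ t m ∩
      Set.Ico ((u : ℝ) / ((A:ℕ):ℝ)) ((v : ℝ) / ((A:ℕ):ℝ))
    = ⋃ j ∈ Finset.Ico u v,
        Set.Ico ((((ℓ + 1) * j + m : ℕ) : ℝ) / ((D:ℕ):ℝ))
                (((((ℓ + 1) * j + m : ℕ) : ℝ) + 1) / ((D:ℕ):ℝ)) := by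
    rw [digitEvent, hDcast]
    rw [Set.iUnion₂_inter]
    apply Set.Subset.antisymm
    · refine Set.iUnion₂_subset fun j hj => ?_
      rintro x ⟨hx1, hx2⟩
      have hju : u ≤ j := by
        by_contra hlt
        push_neg at hlt
        have h1 : x < ((j:ℝ) + 1) / ((A:ℕ):ℝ) := lt_of_lt_of_le hx1.2 (key2 j)
        have h2 : ((j:ℝ) + 1) / ((A:ℕ):ℝ) ≤ (u:ℝ) / ((A:ℕ):ℝ) := by
          gcongr <;> exact_mod_cast hlt
        exact absurd hx2.1 (not_le.mpr (lt_of_lt_of_le h1 h2))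
      have hjv : j < v := by
        by_contra hge
        push_neg at hge
        have h1 : (v:ℝ) / ((A:ℕ):ℝ) ≤ (j:ℝ) / ((A:ℕ):ℝ) := by
          gcongr <;> exact_mod_cast hge
        have h2 : (j:ℝ) / ((A:ℕ):ℝ) ≤ x := le_trans (key1 j) hx1.1
        exact absurd hx2.2 (not_lt.mpr (le_trans h1 h2))
      exact Set.mem_biUnion (Finset.mem_Ico.mpr ⟨hju, hjv⟩) hx1
    · refine Set.iUnion₂_subset fun j hj => ?_
      obtain ⟨hju, hjv⟩ := Finset.mem_Ico.mp hj
      refine Set.subset_iUnion₂_of_subset j (Finset.mem_range.mpr (lt_of_lt_of_le hjv hv)) ?_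
      rintro x hx
      refine ⟨hx, ?_, ?_⟩
      · calc (u:ℝ) / ((A:ℕ):ℝ) ≤ (j:ℝ) / ((A:ℕ):ℝ) := by gcongr <;> exact_mod_cast hju
          _ ≤ _ := key1 j
          _ ≤ x := hx.1
      · calc x < _ := hx.2
          _ ≤ ((j:ℝ) + 1) / ((A:ℕ):ℝ) := key2 j
          _ ≤ (v:ℝ) / ((A:ℕ):ℝ) := by gcongr <;> exact_mod_cast hjv
  rw [hset, measure_biUnion_finset]
  · have hone : ∀ j : ℕ,
        volume (Set.Ico ((((ℓ + 1) * j + m : ℕ) : ℝ) / ((D:ℕ):ℝ))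
          (((((ℓ + 1) * j + m : ℕ) : ℝ) + 1) / ((D:ℕ):ℝ)))
        = ENNReal.ofReal (1 / ((D:ℕ):ℝ)) := by
      intro j
      rw [Real.volume_Ico]
      congr 1
      rw [div_sub_div_same]
      ring_nf
    simp only [hone, Finset.sum_const, Nat.card_Ico, nsmul_eq_mul]
  · intro j hj j' hj' hne
    simp only [Function.onFun]
    have mono : ∀ a b : ℕ, a < b →
        ((((ℓ + 1) * a + m : ℕ) : ℝ) + 1) / ((D:ℕ):ℝ)
          ≤ (((ℓ + 1) * b + m : ℕ) : ℝ) / ((D:ℕ):ℝ) := by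
      intro a b hab
      gcongr
      have : (ℓ + 1) * a + m + 1 ≤ (ℓ + 1) * b + m := by nlinarith
      push_cast
      exact_mod_cast this
    rcases hne.lt_or_gt with h | h
    · rw [Set.Ico_disjoint_Ico]
      exact le_trans (min_le_left _ _) (le_trans (mono _ _ h) (le_max_right _ _))
    · rw [Set.Ico_disjoint_Ico]
      exact le_trans (min_le_right _ _) (le_trans (mono _ _ h) (le_max_left _ _))
  · intro j hj
    exact measurableSet_Ico

lemma digits_inter_of_dvd (S k s ℓ t n m : ℕ)
    (hs1 : 1 ≤ s) (ht1 : 1 ≤ t) (hn : n ≤ k) (hm : m ≤ ℓ)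
    (hdvd : Nat.factorial k ^ S * (k + 1) ^ s ∣ Nat.factorial ℓ ^ S * (ℓ + 1) ^ (t - 1)) :
    volume (digitEvent S k s n ∩ digitEvent S ℓ t m)
      = ENNReal.ofReal (1 / (((k : ℝ) + 1) * ((ℓ : ℝ) + 1))) := by
  obtain ⟨q, hq⟩ := hdvd
  set A1 : ℕ := Nat.factorial k ^ S * (k + 1) ^ (s - 1) with hA1
  set D1 : ℕ := Nat.factorial k ^ S * (k + 1) ^ s with hD1
  set A2 : ℕ := Nat.factorial ℓ ^ S * (ℓ + 1) ^ (t - 1) with hA2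
  set D2 : ℕ := Nat.factorial ℓ ^ S * (ℓ + 1) ^ t with hD2
  have hA1pos : 0 < A1 := Nat.mul_pos (Nat.pow_pos (Nat.factorial_pos k))
    (Nat.pow_pos (Nat.succ_pos k))
  have hA2pos : 0 < A2 := Nat.mul_pos (Nat.pow_pos (Nat.factorial_pos ℓ))
    (Nat.pow_pos (Nat.succ_pos ℓ))
  have hD1A : D1 = A1 * (k + 1) := by
    rw [hA1, hD1, mul_assoc, ← pow_succ, Nat.sub_add_cancel hs1]
  have hD2A : D2 = A2 * (ℓ + 1) := by
    rw [hA2, hD2, mul_assoc, ← pow_succ, Nat.sub_add_cancel ht1]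
  have hD1pos : 0 < D1 := by rw [hD1A]; positivity
  have hD2pos : 0 < D2 := by rw [hD2A]; positivity
  have hqpos : 0 < q := by
    rcases Nat.eq_zero_or_pos q with h | h
    · rw [h, mul_zero] at hq; omega
    · exact h
  have hD1r : (0:ℝ) < (D1:ℕ) := by exact_mod_cast hD1pos
  have hA2r : (0:ℝ) < (A2:ℕ) := by exact_mod_cast hA2pos
  have hD1cast : ((Nat.factorial k : ℝ) ^ S * ((k : ℝ) + 1) ^ s) = ((D1 : ℕ) : ℝ) := by
    rw [hD1]; push_cast; ring
  -- endpoint rewriting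
  have hend : ∀ c : ℕ, ((c : ℝ)) / ((D1:ℕ):ℝ) = ((c * q : ℕ) : ℝ) / ((A2:ℕ):ℝ) := by
    intro c
    rw [div_eq_div_iff hD1r.ne' hA2r.ne']
    push_cast [hq]
    ring
  have hend' : ∀ c : ℕ, ((c : ℝ) + 1) / ((D1:ℕ):ℝ) = ((c * q + q : ℕ) : ℝ) / ((A2:ℕ):ℝ) := by
    intro c
    rw [div_eq_div_iff hD1r.ne' hA2r.ne']
    push_cast [hq]
    ring
  rw [show digitEvent S k s n = ⋃ i ∈ Finset.range A1,
      Set.Ico ((((k + 1) * i + n : ℕ) : ℝ) / ((D1:ℕ):ℝ))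
        (((((k + 1) * i + n : ℕ) : ℝ) + 1) / ((D1:ℕ):ℝ)) by rw [digitEvent, hD1cast]]
  rw [Set.iUnion₂_inter]
  rw [measure_biUnion_finset]
  · have hone : ∀ i ∈ Finset.range A1,
        volume (Set.Ico ((((k + 1) * i + n : ℕ) : ℝ) / ((D1:ℕ):ℝ))
          (((((k + 1) * i + n : ℕ) : ℝ) + 1) / ((D1:ℕ):ℝ)) ∩ digitEvent S ℓ t m)
        = (q : ENNReal) * ENNReal.ofReal (1 / ((D2:ℕ):ℝ)) := by
      intro i hi
      rw [Set.inter_comm, hend, hend']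
      have hvbound : ((k + 1) * i + n) * q + q ≤ A2 := by
        have hi' : i < A1 := Finset.mem_range.mp hi
        have : (k + 1) * i + n + 1 ≤ D1 := by
          rw [hD1A]
          nlinarith
        calc ((k + 1) * i + n) * q + q = ((k + 1) * i + n + 1) * q := by ring
          _ ≤ D1 * q := Nat.mul_le_mul_right q this
          _ = A2 := hq.symm
      rw [digitEvent_windowed S ℓ t m _ _ hm ht1 (Nat.le_add_right _ _) hvbound]
      have hsub : ((k + 1) * i + n) * q + q - ((k + 1) * i + n) * q = q := by omega
      rw [hsub]
    rw [Finset.sum_congr rfl hone, Finset.sum_const, Finset.card_range, nsmul_eq_mul]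
    rw [← ENNReal.ofReal_natCast A1, ← ENNReal.ofReal_natCast q,
      ← ENNReal.ofReal_mul (by positivity), ← ENNReal.ofReal_mul (by positivity)]
    congr 1
    have hD2cast : ((D2:ℕ):ℝ) = ((A1:ℕ):ℝ) * ((k:ℝ)+1) * (q:ℝ) * ((ℓ:ℝ)+1) := by
      rw [hD2A, hq, hD1A]; push_cast; ring
    have hA1r : (0:ℝ) < (A1:ℕ) := by exact_mod_cast hA1pos
    have hqr : (0:ℝ) < (q:ℕ) := by exact_mod_cast hqpos
    rw [hD2cast]
    field_simp
  · intro i hi i' hi' hne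
    simp only [Function.onFun]
    have mono : ∀ a b : ℕ, a < b →
        ((((k + 1) * a + n : ℕ) : ℝ) + 1) / ((D1:ℕ):ℝ)
          ≤ (((k + 1) * b + n : ℕ) : ℝ) / ((D1:ℕ):ℝ) := by
      intro a b hab
      gcongr
      have : (k + 1) * a + n + 1 ≤ (k + 1) * b + n := by nlinarith
      exact_mod_cast this
    have hdisj : ∀ a b : ℕ, a < b → Disjoint
        (Set.Ico ((((k + 1) * a + n : ℕ) : ℝ) / ((D1:ℕ):ℝ))
          (((((k + 1) * a + n : ℕ) : ℝ) + 1) / ((D1:ℕ):ℝ)))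
        (Set.Ico ((((k + 1) * b + n : ℕ) : ℝ) / ((D1:ℕ):ℝ))
          (((((k + 1) * b + n : ℕ) : ℝ) + 1) / ((D1:ℕ):ℝ))) := by
      intro a b hab
      rw [Set.Ico_disjoint_Ico]
      exact le_trans (min_le_left _ _) (le_trans (mono _ _ hab) (le_max_right _ _))
    rcases hne.lt_or_gt with h | h
    · exact (hdisj _ _ h).mono inf_le_left inf_le_left
    · exact ((hdisj _ _ h).symm).mono inf_le_left inf_le_left
  · intro i hi
    apply MeasurableSet.inter measurableSet_Ico
    apply MeasurableSet.iUnion; intro j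
    apply MeasurableSet.iUnion; intro _
    exact measurableSet_Ico

lemma dvd_aux (S k s ℓ t : ℕ) (hsS : s ≤ S) (ht1 : 1 ≤ t)
    (h : k < ℓ ∨ (k = ℓ ∧ s < t)) :
    Nat.factorial k ^ S * (k + 1) ^ s ∣ Nat.factorial ℓ ^ S * (ℓ + 1) ^ (t - 1) := by
  rcases h with h | ⟨rfl, hst⟩
  · have h1 : Nat.factorial k ^ S * (k + 1) ^ s ∣ Nat.factorial k ^ S * (k + 1) ^ S :=
      mul_dvd_mul_left _ (pow_dvd_pow _ hsS)
    have h2 : Nat.factorial k ^ S * (k + 1) ^ S = Nat.factorial (k + 1) ^ S := by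
      rw [← mul_pow, Nat.factorial_succ, mul_comm]
    have h3 : Nat.factorial (k + 1) ^ S ∣ Nat.factorial ℓ ^ S :=
      pow_dvd_pow_of_dvd (Nat.factorial_dvd_factorial h) S
    exact dvd_trans h1 (h2 ▸ dvd_trans h3 (dvd_mul_right _ _))
  · exact mul_dvd_mul_left _ (pow_dvd_pow _ (by omega))

/-- For X uniform on [0,1], the digits of the S-progressive expansion are pairwise
independent: for distinct positions (k,s) ≠ (ℓ,t),
P(X_{ks} = n, X_{ℓt} = m) = 1/((k+1)(ℓ+1)). -/
theorem digits_pairwise_independent (S k s ℓ t n m : ℕ) (hS : 1 ≤ S)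
    (hk : 1 ≤ k) (hs1 : 1 ≤ s) (hsS : s ≤ S)
    (hℓ : 1 ≤ ℓ) (ht1 : 1 ≤ t) (htS : t ≤ S)
    (hne : (k, s) ≠ (ℓ, t)) (hn : n ≤ k) (hm : m ≤ ℓ) :
    volume (digitEvent S k s n ∩ digitEvent S ℓ t m)
      = ENNReal.ofReal (1 / (((k : ℝ) + 1) * ((ℓ : ℝ) + 1))) := by
  rcases Nat.lt_trichotomy k ℓ with hkl | hkl | hkl
  · exact digits_inter_of_dvd S k s ℓ t n m hs1 ht1 hn hm (dvd_aux S k s ℓ t hsS ht1 (Or.inl hkl))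
  · rcases Nat.lt_trichotomy s t with hst | hst | hst
    · exact digits_inter_of_dvd S k s ℓ t n m hs1 ht1 hn hm
        (dvd_aux S k s ℓ t hsS ht1 (Or.inr ⟨hkl, hst⟩))
    · exact absurd (Prod.ext hkl hst) hne
    · rw [Set.inter_comm, mul_comm (((k:ℝ)+1)) (((ℓ:ℝ)+1))]
      exact digits_inter_of_dvd S ℓ t k s m n ht1 hs1 hm hn
        (dvd_aux S ℓ t k s htS hs1 (Or.inr ⟨hkl.symm, hst⟩))
  · rw [Set.inter_comm, mul_comm (((k:ℝ)+1)) (((ℓ:ℝ)+1))]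
    exact digits_inter_of_dvd S ℓ t k s m n ht1 hs1 hm hn
      (dvd_aux S ℓ t k s htS hs1 (Or.inl hkl))
end

section
/- Fix positive integers N and ℓ ≥ 2. Suppose (a_{kn}) and (b_{kn}) for k ≥ 1, n ∈ {1,…,N} satisfy a_{kn} ∈ {−1,0,…,k+1}, b_{kn} ∈ {0,…,k}, and a_{kn} = b_{kn} for all k ≤ ℓ−2. Then |∑_{k=1}^∞ ∑_{n=1}^N (a_{kn} − b_{kn})/((k!)^N (k+1)^n)| ≤ 2/(((ℓ−1)!)^N). -/
set_option maxHeartbeats 1000000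

private lemma geom_aux_s17 (N : ℕ) (r : ℝ) (hr : 2 ≤ r) :
    ∑ n ∈ Finset.Icc 1 N, r / r ^ n ≤ 2 * (1 - (1 / r) ^ N) := by
  have hr0 : (0 : ℝ) < r := by linarith
  have hinv : 1 / r ≤ 1 / 2 := by
    apply div_le_div_of_nonneg_left (by norm_num) (by norm_num) hr
  have hinv0 : (0:ℝ) ≤ 1 / r := by positivity
  have hne : (1 / r : ℝ) ≠ 1 := by
    intro h; rw [h] at hinv; norm_num at hinv
  have h1 : ∑ n ∈ Finset.Icc 1 N, r / r ^ n = ∑ i ∈ Finset.range N, (1 / r) ^ i := by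
    rw [← Finset.Ico_add_one_right_eq_Icc, Finset.sum_Ico_eq_sum_range]
    simp only [Nat.add_sub_cancel]
    refine Finset.sum_congr rfl fun i _ => ?_
    rw [pow_add, pow_one, one_div, inv_pow]
    rw [div_eq_iff (by positivity)]
    field_simp
  rw [h1, geom_sum_eq hne]
  have hx1 : (1 / r) ^ N ≤ 1 := pow_le_one₀ hinv0 (by linarith)
  have key : ((1 / r) ^ N - 1) / (1 / r - 1) = (1 - (1 / r) ^ N) / (1 - 1 / r) := by
    rw [div_eq_div_iff (by linarith) (by linarith)]; ring
  rw [key]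
  have hden : (1 : ℝ) / 2 ≤ 1 - 1 / r := by linarith
  calc (1 - (1 / r) ^ N) / (1 - 1 / r) ≤ (1 - (1 / r) ^ N) / (1 / 2) := by
        apply div_le_div_of_nonneg_left (by linarith) (by norm_num) hden
    _ = 2 * (1 - (1 / r) ^ N) := by ring

/-- If a_{kn} ∈ {−1,…,k+1}, b_{kn} ∈ {0,…,k}, and a_{kn} = b_{kn} for all k ≤ ℓ−2, then
|∑_{k≥1} ∑_{n=1}^N (a_{kn} − b_{kn})/((k!)^N (k+1)^n)| ≤ 2/((ℓ−1)!)^N. -/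
theorem decoding_error_bound (N ℓ : ℕ) (hN : 1 ≤ N) (hℓ : 2 ≤ ℓ)
    (a b : ℕ → ℕ → ℤ)
    (ha : ∀ k n, 1 ≤ k → 1 ≤ n → n ≤ N → -1 ≤ a k n ∧ a k n ≤ (k : ℤ) + 1)
    (hb : ∀ k n, 1 ≤ k → 1 ≤ n → n ≤ N → 0 ≤ b k n ∧ b k n ≤ (k : ℤ))
    (hagree : ∀ k n, 1 ≤ k → k ≤ ℓ - 2 → 1 ≤ n → n ≤ N → a k n = b k n) :
    |∑' k : ℕ, ∑ n ∈ Finset.Icc 1 N,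
        ((a (k + 1) n - b (k + 1) n : ℤ) : ℝ) /
          ((Nat.factorial (k + 1) : ℝ) ^ N * ((k : ℝ) + 2) ^ n)|
      ≤ 2 / (Nat.factorial (ℓ - 1) : ℝ) ^ N := by
  set m := ℓ - 2 with hm
  set F : ℕ → ℝ := fun k => 2 / ((Nat.factorial (k + 1) : ℝ)) ^ N with hF
  set f : ℕ → ℝ := fun k => ∑ n ∈ Finset.Icc 1 N,
      ((a (k + 1) n - b (k + 1) n : ℤ) : ℝ) /
        ((Nat.factorial (k + 1) : ℝ) ^ N * ((k : ℝ) + 2) ^ n) with hfdef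
  set g : ℕ → ℝ := fun k => if m ≤ k then F k - F (k + 1) else 0 with hg
  have hfacpos : ∀ k : ℕ, (0 : ℝ) < (Nat.factorial k : ℝ) := fun k =>
    Nat.cast_pos.mpr (Nat.factorial_pos k)
  have hFpos : ∀ k, 0 < F k := fun k => by
    simp only [hF]; positivity
  have hFanti : ∀ k, F (k + 1) ≤ F k := fun k => by
    simp only [hF]
    apply div_le_div_of_nonneg_left (by norm_num) (by positivity)
    apply pow_le_pow_left₀ (by positivity)
    exact_mod_cast Nat.factorial_le (Nat.le_succ _)
  have hgnn : ∀ k, 0 ≤ g k := fun k => by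
    simp only [hg]; split
    · linarith [hFanti k]
    · exact le_refl 0
  have h1div : Summable (fun n : ℕ => 1 / (Nat.factorial n : ℝ)) := by
    simpa using Real.summable_pow_div_factorial 1
  -- summability of F
  have hFsum : Summable F := by
    refine Summable.of_nonneg_of_le (f := fun k => 2 * (1 / (Nat.factorial (k + 1) : ℝ)))
      (fun k => (hFpos k).le) (fun k => ?_) ?_
    · simp only [hF]
      have h1 : (Nat.factorial (k + 1) : ℝ) ≤ (Nat.factorial (k + 1) : ℝ) ^ N := by
        calc (Nat.factorial (k + 1) : ℝ) = (Nat.factorial (k + 1) : ℝ) ^ 1 := (pow_one _).symm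
          _ ≤ (Nat.factorial (k + 1) : ℝ) ^ N := by
              apply pow_le_pow_right₀ _ hN
              exact_mod_cast (Nat.factorial_pos _)
      have h2 : (0 : ℝ) < Nat.factorial (k + 1) := hfacpos _
      rw [mul_one_div]
      exact div_le_div_of_nonneg_left (by norm_num) h2 h1
    · exact ((summable_nat_add_iff 1).mpr h1div).mul_left 2
  have hgsum : Summable g := by
    apply Summable.of_nonneg_of_le hgnn (fun k => ?_) hFsum
    simp only [hg]; split
    · linarith [(hFpos (k + 1)).le]
    · exact (hFpos k).le
  -- pointwise bound |f k| ≤ g k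
  have hfg : ∀ k, |f k| ≤ g k := by
    intro k
    by_cases hk : m ≤ k
    · simp only [hg, if_pos hk]
      have hP0 : (0 : ℝ) < (Nat.factorial (k + 1) : ℝ) ^ N := by positivity
      have hr0 : (0 : ℝ) < (k : ℝ) + 2 := by positivity
      have hr2 : (2 : ℝ) ≤ (k : ℝ) + 2 := by
        have : (0 : ℝ) ≤ (k : ℝ) := Nat.cast_nonneg k
        linarith
      have habs : ∀ n, 1 ≤ n → n ≤ N →
          |((a (k + 1) n - b (k + 1) n : ℤ) : ℝ)| ≤ (k : ℝ) + 2 := by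
        intro n h1 h2
        obtain ⟨ha1, ha2⟩ := ha (k + 1) n (Nat.le_add_left _ _) h1 h2
        obtain ⟨hb1, hb2⟩ := hb (k + 1) n (Nat.le_add_left _ _) h1 h2
        have hu : a (k + 1) n - b (k + 1) n ≤ (k : ℤ) + 2 := by
          push_cast at ha2; linarith
        have hl : -((k : ℤ) + 2) ≤ a (k + 1) n - b (k + 1) n := by
          push_cast at hb2; linarith
        rw [abs_le]
        constructor
        · exact_mod_cast hl
        · exact_mod_cast hu
      calc |f k| ≤ ∑ n ∈ Finset.Icc 1 N,
            |((a (k + 1) n - b (k + 1) n : ℤ) : ℝ) /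
              ((Nat.factorial (k + 1) : ℝ) ^ N * ((k : ℝ) + 2) ^ n)| :=
            Finset.abs_sum_le_sum_abs _ _
        _ ≤ ∑ n ∈ Finset.Icc 1 N,
              ((k : ℝ) + 2) / ((Nat.factorial (k + 1) : ℝ) ^ N * ((k : ℝ) + 2) ^ n) := by
            apply Finset.sum_le_sum
            intro n hn
            rw [Finset.mem_Icc] at hn
            rw [abs_div, abs_of_pos (mul_pos hP0 (pow_pos hr0 n))]
            exact div_le_div_of_nonneg_right (habs n hn.1 hn.2)
              (mul_pos hP0 (pow_pos hr0 n)).le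
        _ = (1 / (Nat.factorial (k + 1) : ℝ) ^ N) *
              ∑ n ∈ Finset.Icc 1 N, ((k : ℝ) + 2) / ((k : ℝ) + 2) ^ n := by
            rw [Finset.mul_sum]
            refine Finset.sum_congr rfl fun n _ => ?_
            have hrn : (0 : ℝ) < ((k : ℝ) + 2) ^ n := pow_pos hr0 n
            field_simp
        _ ≤ (1 / (Nat.factorial (k + 1) : ℝ) ^ N) * (2 * (1 - (1 / ((k : ℝ) + 2)) ^ N)) := by
            apply mul_le_mul_of_nonneg_left (geom_aux_s17 N _ hr2) (by positivity)
        _ = F k - F (k + 1) := by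
            simp only [hF]
            have hfac : (Nat.factorial (k + 1 + 1) : ℝ) =
                ((k : ℝ) + 2) * (Nat.factorial (k + 1) : ℝ) := by
              push_cast [Nat.factorial_succ (k + 1)]
              ring
            rw [hfac, mul_pow]
            have hrN : (0 : ℝ) < ((k : ℝ) + 2) ^ N := pow_pos hr0 N
            field_simp
            ring_nf
            rw [← mul_pow, inv_mul_cancel₀ (by positivity), one_pow]
    · have hk' : k + 1 ≤ ℓ - 2 := by omega
      have hf0 : f k = 0 := by
        simp only [hfdef]
        apply Finset.sum_eq_zero
        intro n hn
        rw [Finset.mem_Icc] at hn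
        rw [hagree (k + 1) n (Nat.le_add_left _ _) hk' hn.1 hn.2]
        simp
      rw [hf0, abs_zero]
      exact hgnn k
  -- summability of f
  have hfsum : Summable f := by
    apply Summable.of_norm_bounded hgsum
    intro k; rw [Real.norm_eq_abs]; exact hfg k
  -- tsum g = F m
  have hGsum : Summable (fun k => F (k + m)) := (summable_nat_add_iff m).mpr hFsum
  have hGsum' : Summable (fun k => F (k + 1 + m)) :=
    (summable_nat_add_iff (f := fun k => F (k + m)) 1).mpr hGsum
  have htsumg : ∑' k, g k = F m := by
    have hinj : Function.Injective (fun k : ℕ => k + m) := fun x y h => by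
      simpa using h
    have hsupp : Function.support g ⊆ Set.range (fun k : ℕ => k + m) := by
      intro x hx
      by_contra hc
      apply hx
      exact if_neg (fun hmx => hc ⟨x - m, show x - m + m = x by omega⟩)
    rw [← Function.Injective.tsum_eq hinj hsupp]
    have heq : ∀ k : ℕ, g ((fun k : ℕ => k + m) k) = F (k + m) - F (k + 1 + m) := by
      intro k
      simp only [hg, if_pos (Nat.le_add_left m k)]
      congr 2
      omega
    rw [tsum_congr heq, Summable.tsum_sub hGsum hGsum']
    have h0 : ∑' k : ℕ, F (k + m) = F (0 + m) + ∑' k : ℕ, F ((k + 1) + m) :=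
      Summable.tsum_eq_zero_add hGsum
    have hsh2 : ∑' k : ℕ, F ((k + 1) + m) = ∑' k : ℕ, F (k + 1 + m) := rfl
    rw [h0, hsh2]
    simp
  -- conclude
  have habs1 : |∑' k, f k| ≤ ∑' k, g k := by
    calc |∑' k, f k| ≤ ∑' k, |f k| := by
          have h := norm_tsum_le_tsum_norm (f := f) (by
            simpa only [Real.norm_eq_abs] using hfsum.abs)
          simpa only [Real.norm_eq_abs] using h
      _ ≤ ∑' k, g k := Summable.tsum_le_tsum hfg hfsum.abs hgsum
  have hfinal : F m = 2 / (Nat.factorial (ℓ - 1) : ℝ) ^ N := by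
    simp only [hF]
    rw [show m + 1 = ℓ - 1 by omega]
  calc |∑' k, f k| ≤ ∑' k, g k := habs1
    _ = F m := htsumg
    _ = 2 / (Nat.factorial (ℓ - 1) : ℝ) ^ N := hfinal
end
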